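/- (Kantorovich's inequality) Let Z be a random variable taking values in [m, M] with 0 < m ≤ M. Then E[Z]·E[1/Z] ≤ (m + M)²/(4mM). -/

import Mathlib

open MeasureTheory

/-- Kantorovich's inequality: if `Z` takes values in `[m, M]` with `0 < m ≤ M` almost surely,
then `E[Z] · E[1/Z] ≤ (m + M)² / (4 m M)`. -/
theorem kantorovich_inequality
    {Ω : Type*} [MeasurableSpace Ω] (P : Measure Ω) [IsProbabilityMeasure P]
    (m M : ℝ) (hm : 0 < m) (hmM : m ≤ M)
    (Z : Ω → ℝ) (hZmeas : Measurable Z)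
    (hbd : ∀ᵐ ω ∂P, m ≤ Z ω ∧ Z ω ≤ M)
    (hZint : Integrable Z P) (hZinvint : Integrable (fun ω => 1 / Z ω) P) :
    (∫ ω, Z ω ∂P) * (∫ ω, 1 / Z ω ∂P) ≤ (m + M) ^ 2 / (4 * m * M) := by
  have hM : 0 < M := lt_of_lt_of_le hm hmM
  have hmM0 : 0 < m * M := mul_pos hm hM
  set a := ∫ ω, Z ω ∂P with ha_def
  set b := ∫ ω, 1 / Z ω ∂P with hb_def
  have ha : 0 ≤ a := by
    apply integral_nonneg_of_ae
    filter_upwards [hbd] with ω hω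
    exact le_trans hm.le hω.1
  -- pointwise bound: 1/z ≤ (m + M - z) / (m*M)
  have hpt : ∀ᵐ ω ∂P, (1 : ℝ) / Z ω ≤ (m + M - Z ω) / (m * M) := by
    filter_upwards [hbd] with ω hω
    have hz : 0 < Z ω := lt_of_lt_of_le hm hω.1
    rw [div_le_div_iff₀ hz hmM0]
    nlinarith [mul_nonneg (sub_nonneg.2 hω.1) (sub_nonneg.2 hω.2)]
  have hint2 : Integrable (fun ω => (m + M - Z ω) / (m * M)) P := by
    apply Integrable.div_const
    exact (integrable_const (m + M)).sub hZint
  have hb : b ≤ (m + M - a) / (m * M) := by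
    have := integral_mono_ae hZinvint hint2 hpt
    rw [hb_def]
    refine le_trans this (le_of_eq ?_)
    rw [integral_div, integral_sub (integrable_const _) hZint, integral_const]
    simp
    rfl
  have hb' : b * (m * M) ≤ m + M - a := (le_div_iff₀ hmM0).mp hb
  rw [le_div_iff₀ (by positivity : (0:ℝ) < 4 * m * M)]
  nlinarith [mul_le_mul_of_nonneg_left hb' ha, sq_nonneg (m + M - 2 * a)]
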